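/- Let p be a prime, G a group, θ : G → 1 + pℤₚ a homomorphism, and c : G → ℤₚ a 1-cocycle (c(gh) = c(g) + θ(g)·c(h)). Then for every i ≥ 1, c maps the i-th term G^{(i,p)} of the lower p-central series into p^{i−1}ℤₚ. -/
import Mathlib

/-- The lower `p`-central series of a group, indexed so that `lowerPCentral p G 0 = G`
corresponds to `G^{(1,p)}` and `lowerPCentral p G i` to `G^{(i+1,p)}`. -/
def lowerPCentral (p : ℕ) (G : Type*) [Group G] : ℕ → Subgroup G
  | 0 => ⊤
  | i + 1 =>
    Subgroup.closure
      ({x | ∃ h ∈ lowerPCentral p G i, x = h ^ p} ∪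
        {x | ∃ g : G, ∃ h ∈ lowerPCentral p G i, x = g⁻¹ * h⁻¹ * g * h})

theorem stmt8 (p : ℕ) [Fact p.Prime] {G : Type*} [Group G]
    (θ : G →* ℤ_[p]ˣ)
    (hθ : ∀ g : G, ∃ y : ℤ_[p], (θ g : ℤ_[p]) = 1 + (p : ℤ_[p]) * y)
    (c : G → ℤ_[p])
    (hc : ∀ g h : G, c (g * h) = c g + (θ g : ℤ_[p]) * c h) :
    ∀ (i : ℕ) (g : G), g ∈ lowerPCentral p G i →
      ∃ y : ℤ_[p], c g = (p : ℤ_[p]) ^ i * y := by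
  have hc1 : c 1 = 0 := by have h := hc 1 1; simpa using h
  have hcinv : ∀ g : G, c g⁻¹ = -(((θ g)⁻¹ : ℤ_[p]ˣ) : ℤ_[p]) * c g := by
    intro g
    have h := hc g g⁻¹
    simp [hc1] at h
    have h2 : ((θ g : ℤ_[p])) * c g⁻¹ = - c g := by linear_combination -h
    calc c g⁻¹ = (((θ g)⁻¹ : ℤ_[p]ˣ) : ℤ_[p]) * ((θ g : ℤ_[p]) * c g⁻¹) := by
          rw [← mul_assoc]; simp
      _ = -(((θ g)⁻¹ : ℤ_[p]ˣ) : ℤ_[p]) * c g := by rw [h2]; ring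
  have hpow : ∀ (g : G) (n : ℕ),
      c (g ^ n) = (∑ j ∈ Finset.range n, (θ g : ℤ_[p]) ^ j) * c g := by
    intro g n
    induction n with
    | zero => simp [hc1]
    | succ n ih =>
      rw [pow_succ', hc, ih, geom_sum_succ]
      ring
  -- geometric sum of an element ≡ 1 mod p is p·(1 + t)
  have hS : ∀ u : ℤ_[p], (∃ z, u = 1 + (p : ℤ_[p]) * z) →
      ∃ t, (∑ j ∈ Finset.range p, u ^ j) = (p : ℤ_[p]) * (1 + t) := by
    intro u ⟨z, hz⟩
    have hdvd : (p : ℤ_[p]) ∣ (∑ j ∈ Finset.range p, u ^ j) - (p : ℤ_[p]) := by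
      have heq : (∑ j ∈ Finset.range p, u ^ j) - (p : ℤ_[p])
          = ∑ j ∈ Finset.range p, (u ^ j - 1) := by
        rw [Finset.sum_sub_distrib]
        simp
      rw [heq]
      refine Finset.dvd_sum fun j _ => ?_
      have h1 : u - 1 ∣ u ^ j - 1 ^ j := sub_dvd_pow_sub_pow u 1 j
      rw [one_pow] at h1
      exact dvd_trans ⟨z, by rw [hz]; ring⟩ h1
    obtain ⟨t, ht⟩ := hdvd
    exact ⟨t, by linear_combination ht⟩
  -- main strengthened induction
  have main : ∀ i : ℕ, ∀ g : G, g ∈ lowerPCentral p G i →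
      (∃ z, (θ g : ℤ_[p]) = 1 + (p : ℤ_[p]) ^ (i + 1) * z) ∧
      (∃ y, c g = (p : ℤ_[p]) ^ i * y) := by
    intro i
    induction i with
    | zero =>
      intro g _
      refine ⟨?_, ⟨c g, by simp⟩⟩
      obtain ⟨z, hz⟩ := hθ g
      exact ⟨z, by rw [hz]; ring⟩
    | succ i ih =>
      intro g hg
      rw [lowerPCentral] at hg
      induction hg using Subgroup.closure_induction with
      | mem x hx =>
        rcases hx with hx | hx
        · -- p-th powers
          obtain ⟨h, hh, rfl⟩ := hx
          obtain ⟨⟨z, hz⟩, ⟨y, hy⟩⟩ := ih h hh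
          obtain ⟨t, ht⟩ := hS (θ h : ℤ_[p]) ⟨(p : ℤ_[p]) ^ i * z, by rw [hz]; ring⟩
          have hθpow : ((θ (h ^ p) : ℤ_[p])) = (θ h : ℤ_[p]) ^ p := by
            rw [map_pow]; norm_cast
          have hgeom : ((θ h : ℤ_[p]) - 1) * (∑ j ∈ Finset.range p, (θ h : ℤ_[p]) ^ j)
              = (θ h : ℤ_[p]) ^ p - 1 := by
            rw [mul_comm]
            exact geom_sum_mul _ p
          constructor
          · refine ⟨z * (1 + t), ?_⟩
            rw [hθpow]
            linear_combination (-1 : ℤ_[p]) * hgeom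
              + (∑ j ∈ Finset.range p, (θ h : ℤ_[p]) ^ j) * hz
              + ((p : ℤ_[p]) ^ (i + 1) * z) * ht
          · refine ⟨(1 + t) * y, ?_⟩
            rw [hpow, ht, hy]
            ring
        · -- commutators
          obtain ⟨a, h, hh, rfl⟩ := hx
          obtain ⟨⟨zh, hzh⟩, ⟨yh, hyh⟩⟩ := ih h hh
          obtain ⟨za, hza⟩ := hθ a
          constructor
          · refine ⟨0, ?_⟩
            have h1 : θ (a⁻¹ * h⁻¹ * a * h) = 1 := by
              rw [map_mul, map_mul, map_mul, map_inv, map_inv]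
              simp [mul_assoc, mul_comm, mul_left_comm]
            rw [h1]
            simp
          · set u : ℤ_[p] := (θ a : ℤ_[p]) with hu
            set v : ℤ_[p] := (θ h : ℤ_[p]) with hv
            set ui : ℤ_[p] := (((θ a)⁻¹ : ℤ_[p]ˣ) : ℤ_[p]) with hui
            set vi : ℤ_[p] := (((θ h)⁻¹ : ℤ_[p]ˣ) : ℤ_[p]) with hvi
            have huu : ui * u = 1 := by rw [hui, hu]; norm_cast; simp
            have hvv : vi * v = 1 := by rw [hvi, hv]; norm_cast; simp
            have e1 : c (a⁻¹ * h⁻¹ * a * h)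
                = c a⁻¹ + ui * (c h⁻¹ + vi * (c a + u * c h)) := by
              rw [hc (a⁻¹ * h⁻¹ * a) h, hc (a⁻¹ * h⁻¹) a, hc a⁻¹ h⁻¹]
              have t1 : ((θ (a⁻¹ * h⁻¹ * a) : ℤ_[p])) = ui * vi * u := by
                rw [map_mul, map_mul, map_inv, map_inv]; push_cast; ring
              have t2 : ((θ (a⁻¹ * h⁻¹) : ℤ_[p])) = ui * vi := by
                rw [map_mul, map_inv, map_inv]; push_cast; ring
              have t3 : ((θ a⁻¹ : ℤ_[p])) = ui := by rw [map_inv]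
              rw [t1, t2, t3]
              ring
            rw [e1, hcinv a, hcinv h]
            refine ⟨ui * vi * (yh * za - c a * zh), ?_⟩
            linear_combination (-ui * vi * c a) * hzh + (ui * c a) * hvv
              + (ui * vi * c h) * hza + ((p : ℤ_[p]) * za * ui * vi) * hyh
      | one =>
        exact ⟨⟨0, by simp⟩, ⟨0, by simp [hc1]⟩⟩
      | mul a b _ _ iha ihb =>
        obtain ⟨⟨za, hza⟩, ⟨ya, hya⟩⟩ := iha
        obtain ⟨⟨zb, hzb⟩, ⟨yb, hyb⟩⟩ := ihb
        constructor
        · refine ⟨za + zb + (p : ℤ_[p]) ^ (i + 2) * za * zb, ?_⟩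
          rw [map_mul]
          push_cast
          rw [hza, hzb]
          ring
        · refine ⟨ya + (θ a : ℤ_[p]) * yb, ?_⟩
          rw [hc, hya, hyb]
          ring
      | inv a _ iha =>
        obtain ⟨⟨za, hza⟩, ⟨ya, hya⟩⟩ := iha
        have huu : (((θ a)⁻¹ : ℤ_[p]ˣ) : ℤ_[p]) * (θ a : ℤ_[p]) = 1 := by
          norm_cast; simp
        constructor
        · refine ⟨-(((θ a)⁻¹ : ℤ_[p]ˣ) : ℤ_[p]) * za, ?_⟩
          rw [map_inv]
          linear_combination huu - (((θ a)⁻¹ : ℤ_[p]ˣ) : ℤ_[p]) * hza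
        · refine ⟨-(((θ a)⁻¹ : ℤ_[p]ˣ) : ℤ_[p]) * ya, ?_⟩
          rw [hcinv, hya]
          ring
  intro i g hg
  exact (main i g hg).2
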